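/- For natural numbers k and n with 1 ≤ k < n, the k-th homotopy group π_k(Sⁿ) of the n-sphere (based at any point) is trivial. -/

import Mathlib

/-!
STATEMENT 10: For natural numbers `k` and `n` with `1 ≤ k < n`, the `k`-th homotopy
group `π_k(Sⁿ)` of the `n`-sphere (based at any point) is trivial.
-/

open scoped Topology

open Metric Set unitInterval Topology.Homotopy Module

set_option maxHeartbeats 2000000

lemma lip_approx_real {X : Type*} [MetricSpace X] [CompactSpace X] [Nonempty X]
    {f : X → ℝ} (hf : Continuous f) {ε : ℝ} (hε : 0 < ε) :
    ∃ K : NNReal, ∃ g : X → ℝ, LipschitzWith K g ∧ ∀ t, |g t - f t| ≤ ε := by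
  obtain ⟨δ, hδ, hδf⟩ := Metric.uniformContinuous_iff.1
    (CompactSpace.uniformContinuous_of_continuous hf) ε hε
  obtain ⟨M, hM⟩ := (isCompact_range hf).isBounded.subset_closedBall 0
  have hM' : ∀ t, |f t| ≤ M := fun t => by
    simpa [Real.dist_eq] using hM (mem_range_self t)
  have hM0 : 0 ≤ M := (abs_nonneg _).trans (hM' (Classical.arbitrary X))
  set K : NNReal := Real.toNNReal (2 * M / δ) with hK
  have hKr : (2 * M / δ : ℝ) ≤ K := Real.le_coe_toNNReal _
  set g : X → ℝ := fun x => ⨅ y, f y + K * dist x y with hg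
  have hbdd : ∀ x, BddBelow (range fun y => f y + K * dist x y) := by
    intro x
    refine ⟨-M, ?_⟩
    rintro _ ⟨y, rfl⟩
    have h1 := abs_le.1 (hM' y)
    have h2 : (0:ℝ) ≤ K * dist x y :=
      mul_nonneg K.coe_nonneg dist_nonneg
    simp only []
    linarith [h1.1]
  have hg_le : ∀ x, g x ≤ f x := by
    intro x
    simpa using ciInf_le (hbdd x) x
  have hle_g : ∀ x, f x - ε ≤ g x := by
    intro x
    refine le_ciInf fun y => ?_
    rcases lt_or_ge (dist x y) δ with h | h
    · have h2 : dist (f x) (f y) < ε := hδf h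
      rw [Real.dist_eq] at h2
      have h3 := abs_lt.1 h2
      have h4 : (0:ℝ) ≤ K * dist x y := mul_nonneg K.coe_nonneg dist_nonneg
      linarith [h3.1]
    · have h1 : (2 * M / δ) * δ ≤ (K : ℝ) * dist x y :=
        mul_le_mul hKr h (le_of_lt hδ) K.coe_nonneg
      rw [div_mul_cancel₀ _ (ne_of_gt hδ)] at h1
      have h2 := abs_le.1 (hM' x)
      have h3 := abs_le.1 (hM' y)
      linarith [h2.2, h3.1]
  have hlip : LipschitzWith K g := by
    refine LipschitzWith.of_dist_le_mul fun a b => ?_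
    have key : ∀ a b : X, g a ≤ g b + K * dist a b := by
      intro a b
      have : ∀ y, g a - K * dist a b ≤ f y + K * dist b y := by
        intro y
        have h1 : g a ≤ f y + K * dist a y := ciInf_le (hbdd a) y
        have h2 : dist a y ≤ dist a b + dist b y := dist_triangle a b y
        nlinarith [K.coe_nonneg]
      have := le_ciInf this
      linarith
    rw [Real.dist_eq, abs_sub_le_iff]
    constructor
    · linarith [key a b]
    · rw [dist_comm a b]; linarith [key b a]
  exact ⟨K, g, hlip, fun t => abs_le.2 ⟨by linarith [hle_g t, hg_le t], by linarith [hg_le t, hle_g t]⟩⟩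


lemma lip_approx {X : Type*} [MetricSpace X] [CompactSpace X] [Nonempty X] {m : ℕ}
    {f : X → EuclideanSpace ℝ (Fin m)} (hf : Continuous f) {ε : ℝ} (hε : 0 < ε) :
    ∃ K : NNReal, ∃ g : X → EuclideanSpace ℝ (Fin m),
      LipschitzWith K g ∧ ∀ t, dist (g t) (f t) ≤ ε := by
  have hε' : 0 < ε / (m + 1) := by positivity
  have hcomp : ∀ i : Fin m, Continuous fun t => f t i :=
    fun i => (PiLp.continuous_apply 2 _ i).comp hf
  choose K g hg hgf using fun i : Fin m => lip_approx_real (hcomp i) hε'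
  refine ⟨∑ i, K i, fun t => (WithLp.toLp 2 (fun i => g i t) : EuclideanSpace ℝ (Fin m)), ?_, ?_⟩
  · refine LipschitzWith.of_dist_le_mul fun a b => ?_
    rw [EuclideanSpace.dist_eq]
    have h1 : ∀ i : Fin m, dist (g i a) (g i b) ^ 2 ≤ ((K i : ℝ) * dist a b) ^ 2 := by
      intro i
      have := (hg i).dist_le_mul a b
      have h0 : (0:ℝ) ≤ dist (g i a) (g i b) := dist_nonneg
      nlinarith
    have h2 : (∑ i, dist (g i a) (g i b) ^ 2) ≤ ∑ i, ((K i : ℝ) * dist a b) ^ 2 :=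
      Finset.sum_le_sum fun i _ => h1 i
    have h3 : (∑ i, ((K i : ℝ) * dist a b) ^ 2) ≤ ((∑ i, (K i : ℝ)) * dist a b) ^ 2 := by
      have hsq : (∑ i, (K i : ℝ) ^ 2) ≤ (∑ i, (K i : ℝ)) ^ 2 :=
        Finset.sum_sq_le_sq_sum_of_nonneg fun i _ => (K i).coe_nonneg
      calc (∑ i, ((K i : ℝ) * dist a b) ^ 2) = (∑ i, (K i : ℝ) ^ 2) * dist a b ^ 2 := by
            rw [Finset.sum_mul]; congr 1; ext i; ring
        _ ≤ (∑ i, (K i : ℝ)) ^ 2 * dist a b ^ 2 := by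
            have := sq_nonneg (dist a b); nlinarith
        _ = ((∑ i, (K i : ℝ)) * dist a b) ^ 2 := by ring
    have h4 : Real.sqrt (∑ i, dist (g i a) (g i b) ^ 2) ≤ (∑ i, (K i : ℝ)) * dist a b := by
      rw [show ((∑ i, (K i : ℝ)) * dist a b) = Real.sqrt (((∑ i, (K i : ℝ)) * dist a b) ^ 2) by
        rw [Real.sqrt_sq (by positivity)]]
      exact Real.sqrt_le_sqrt (h2.trans h3)
    calc Real.sqrt (∑ i, dist (g i a) (g i b) ^ 2) ≤ (∑ i, (K i : ℝ)) * dist a b := h4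
      _ = ((∑ i, K i : NNReal) : ℝ) * dist a b := by push_cast; ring
  · intro t
    rw [EuclideanSpace.dist_eq]
    have h1 : (∑ i, dist ((fun i => g i t) i) (f t i) ^ 2) ≤ ∑ _i : Fin m, (ε / (m+1)) ^ 2 := by
      refine Finset.sum_le_sum fun i _ => ?_
      have := hgf i t
      rw [Real.dist_eq]
      nlinarith [abs_nonneg (g i t - f t i)]
    have h2 : (∑ _i : Fin m, (ε / (m+1) : ℝ) ^ 2) ≤ ε ^ 2 := by
      rw [Finset.sum_const, Finset.card_univ, Fintype.card_fin, nsmul_eq_mul]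
      rw [div_pow]
      have heq : (m:ℝ) * (ε^2/((m:ℝ)+1)^2) = ε^2 * ((m:ℝ)/((m:ℝ)+1)^2) := by ring
      have hle : (m:ℝ)/((m:ℝ)+1)^2 ≤ 1 := by
        rw [div_le_one (by positivity)]; nlinarith [Nat.cast_nonneg (α := ℝ) m]
      rw [heq]
      nlinarith [sq_nonneg ε]
    calc Real.sqrt _ ≤ Real.sqrt (ε ^ 2) := Real.sqrt_le_sqrt (h1.trans h2)
      _ = ε := Real.sqrt_sq hε.le


lemma dist_normalize_le {E : Type*} [NormedAddCommGroup E] [NormedSpace ℝ E]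
    {a b : E} {r : ℝ} (hr : 0 < r) (ha : r ≤ ‖a‖) (hb : r ≤ ‖b‖) :
    dist (‖a‖⁻¹ • a) (‖b‖⁻¹ • b) ≤ (2 / r) * dist a b := by
  have ha0 : ‖a‖ ≠ 0 := ne_of_gt (lt_of_lt_of_le hr ha)
  have hb0 : ‖b‖ ≠ 0 := ne_of_gt (lt_of_lt_of_le hr hb)
  have hid : ‖a‖⁻¹ • a - ‖b‖⁻¹ • b = ‖a‖⁻¹ • (a - b) + (‖a‖⁻¹ - ‖b‖⁻¹) • b := by
    rw [smul_sub, sub_smul]; abel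
  rw [dist_eq_norm, hid]
  have h1 : ‖(‖a‖⁻¹ : ℝ) • (a - b)‖ = ‖a - b‖ / ‖a‖ := by
    rw [norm_smul, Real.norm_eq_abs, abs_inv, abs_norm]; ring
  have h2 : ‖((‖a‖⁻¹ - ‖b‖⁻¹ : ℝ)) • b‖ ≤ ‖a - b‖ / ‖a‖ := by
    rw [norm_smul, Real.norm_eq_abs]
    have heq : (‖a‖⁻¹ - ‖b‖⁻¹ : ℝ) = (‖b‖ - ‖a‖) / (‖a‖ * ‖b‖) := by field_simp
    rw [heq, abs_div, abs_mul, abs_norm, abs_norm]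
    have h3 : |‖b‖ - ‖a‖| ≤ ‖a - b‖ := by
      rw [abs_sub_comm]; exact abs_norm_sub_norm_le a b
    calc |‖b‖ - ‖a‖| / (‖a‖ * ‖b‖) * ‖b‖ = |‖b‖ - ‖a‖| / ‖a‖ := by field_simp
      _ ≤ ‖a - b‖ / ‖a‖ := by gcongr
  have h4 : ‖a - b‖ / ‖a‖ ≤ ‖a - b‖ / r := by
    apply div_le_div_of_nonneg_left (norm_nonneg _) hr ha
  calc ‖‖a‖⁻¹ • (a - b) + (‖a‖⁻¹ - ‖b‖⁻¹) • b‖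
      ≤ ‖(‖a‖⁻¹ : ℝ) • (a - b)‖ + ‖((‖a‖⁻¹ - ‖b‖⁻¹ : ℝ)) • b‖ := norm_add_le _ _
    _ ≤ ‖a - b‖ / ‖a‖ + ‖a - b‖ / ‖a‖ := by rw [h1]; gcongr
    _ ≤ ‖a - b‖ / r + ‖a - b‖ / r := by gcongr
    _ = (2 / r) * dist a b := by rw [dist_eq_norm]; ring


lemma dimH_sphere_ball {n : ℕ} (v : EuclideanSpace ℝ (Fin (n+1))) (hv : ‖v‖ = 1)
    {r : ℝ} (hr : 0 < r) (hr2 : r < 2) :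
    (n : ENNReal) ≤ dimH (sphere (0 : EuclideanSpace ℝ (Fin (n+1))) 1 ∩ ball (-v) r) := by
  set B : Set (EuclideanSpace ℝ (Fin (n+1))) := sphere (0 : EuclideanSpace ℝ (Fin (n+1))) 1 ∩ ball (-v) r with hB
  have hvv : dist v (-v) = 2 := by
    rw [dist_eq_norm, sub_neg_eq_add, ← two_smul ℝ v, norm_smul]
    simp [hv]
  have hv0 : v ≠ 0 := fun h => by simp [h] at hv
  have hmv : (-v : EuclideanSpace ℝ (Fin (n+1))) ∈ sphere (0 : EuclideanSpace ℝ (Fin (n+1))) 1 := by simp [hv]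
  have hne : ∀ y ∈ B, (innerSL ℝ v) y ≠ 1 := by
    rintro y ⟨hy1, hy2⟩ h
    have hy : ‖y‖ = 1 := mem_sphere_zero_iff_norm.1 hy1
    have : v = y := (inner_eq_one_iff_of_norm_eq_one hv hy).1 h
    rw [← this] at hy2
    rw [mem_ball, hvv] at hy2
    linarith
  -- the open set U in the orthogonal complement
  set U : Set ((ℝ ∙ v)ᗮ) := (fun w : (ℝ ∙ v)ᗮ => stereoInvFunAux v ↑w) ⁻¹' (ball (-v) r) with hU
  have hUopen : IsOpen U :=
    (isOpen_ball).preimage ((contDiff_stereoInvFunAux (m := 0)).continuous.comp continuous_subtype_val)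
  have hvne : (-v : EuclideanSpace ℝ (Fin (n+1))) ≠ v := by
    intro h
    apply hv0
    have h2 : v + v = 0 := neg_eq_iff_add_eq_zero.mp h
    have h3 : (2:ℝ) • v = 0 := by rw [two_smul]; exact h2
    exact (smul_eq_zero.mp h3).resolve_left two_ne_zero
  have hUne : stereoToFun v (-v) ∈ U := by
    have h1 : stereoInvFun hv (stereoToFun v ((⟨-v, hmv⟩ : sphere (0 : EuclideanSpace ℝ (Fin (n+1))) 1) : EuclideanSpace ℝ (Fin (n+1)))) = ⟨-v, hmv⟩ :=
      stereo_left_inv hv hvne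
    have h2 : stereoInvFunAux v ↑(stereoToFun v (-v)) = -v := congrArg Subtype.val h1
    simp only [hU, mem_preimage, h2]
    exact mem_ball_self hr
  have hUsub : U ⊆ (fun y : EuclideanSpace ℝ (Fin (n+1)) => stereoToFun v y) '' B := by
    intro w hw
    refine ⟨stereoInvFun hv w, ⟨(stereoInvFun hv w).2, hw⟩, ?_⟩
    exact stereo_right_inv hv w
  have hrank : finrank ℝ ((ℝ ∙ v)ᗮ) = n := by
    have h1 := Submodule.finrank_add_finrank_orthogonal (ℝ ∙ v)
    rw [finrank_span_singleton hv0, finrank_euclideanSpace_fin] at h1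
    omega
  have hdim1 : (n : ENNReal) = dimH U := by
    rw [Real.dimH_of_nonempty_interior (by rw [hUopen.interior_eq]; exact ⟨_, hUne⟩), hrank]
  have hdim2 : dimH ((fun y : EuclideanSpace ℝ (Fin (n+1)) => stereoToFun v y) '' B) ≤ dimH B := by
    refine dimH_image_le_of_locally_lipschitzOn fun y hy => ?_
    have hopen : IsOpen {x : EuclideanSpace ℝ (Fin (n+1)) | (innerSL ℝ v) x ≠ 1} :=
      isOpen_ne.preimage (innerSL ℝ v).continuous
    have hcd : ContDiffAt ℝ 1 (stereoToFun v) y :=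
      ((contDiffOn_stereoToFun).contDiffAt (hopen.mem_nhds (hne y hy))).of_le (by exact_mod_cast le_top)
    obtain ⟨K, t, ht, hlip⟩ := hcd.exists_lipschitzOnWith
    exact ⟨K, t, mem_nhdsWithin_of_mem_nhds ht, hlip⟩
  calc (n : ENNReal) = dimH U := hdim1
    _ ≤ dimH ((fun y : EuclideanSpace ℝ (Fin (n+1)) => stereoToFun v y) '' B) := dimH_mono hUsub
    _ ≤ dimH B := hdim2


lemma nullhomotopic_rel_of_missed {n : ℕ} {Z : Type*} [TopologicalSpace Z]
    (q x : sphere (0 : EuclideanSpace ℝ (Fin (n+1))) 1) (hxq : x ≠ q)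
    (g : C(Z, sphere (0 : EuclideanSpace ℝ (Fin (n+1))) 1)) (hg : ∀ z, g z ≠ q)
    (S : Set Z) (hS : ∀ z ∈ S, g z = x) :
    g.HomotopicRel (ContinuousMap.const Z x) S := by
  have hq : ‖(q : EuclideanSpace ℝ (Fin (n+1)))‖ = 1 := mem_sphere_zero_iff_norm.1 q.2
  have hinner : ∀ y : sphere (0 : EuclideanSpace ℝ (Fin (n+1))) 1, y ≠ q →
      (innerSL ℝ (q : EuclideanSpace ℝ (Fin (n+1)))) (y : EuclideanSpace ℝ (Fin (n+1))) ≠ 1 := by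
    intro y hy h
    have hy1 : ‖(y : EuclideanSpace ℝ (Fin (n+1)))‖ = 1 := mem_sphere_zero_iff_norm.1 y.2
    have := (inner_eq_one_iff_of_norm_eq_one hq hy1).1 h
    exact hy (Subtype.ext this.symm)
  -- σ ∘ g is continuous
  have hσg : Continuous fun z => stereoToFun (q : EuclideanSpace ℝ (Fin (n+1)))
      ((g z : EuclideanSpace ℝ (Fin (n+1)))) := by
    refine continuousOn_stereoToFun.comp_continuous
      (continuous_subtype_val.comp g.continuous) fun z => ?_
    exact hinner (g z) (hg z)
  set w₀ := stereoToFun (q : EuclideanSpace ℝ (Fin (n+1))) (x : EuclideanSpace ℝ (Fin (n+1)))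
    with hw₀
  refine ⟨⟨⟨⟨fun p => stereoInvFun hq ((1 - (p.1 : ℝ)) • stereoToFun _ ((g p.2 : EuclideanSpace ℝ (Fin (n+1)))) + (p.1 : ℝ) • w₀), ?_⟩, ?_, ?_⟩, ?_⟩⟩
  · -- continuity
    apply (continuous_stereoInvFun hq).comp
    have hσg' := hσg.comp continuous_snd (X := I × Z)
    fun_prop
  · -- map_zero
    intro z
    simp only [Icc.coe_zero, sub_zero, one_smul, zero_smul, add_zero]
    exact stereo_left_inv hq (fun h => hg z (Subtype.ext h))
  · -- map_one
    intro z
    simp only [Icc.coe_one, sub_self, zero_smul, one_smul, zero_add]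
    exact stereo_left_inv hq (fun h => hxq (Subtype.ext h))
  · -- rel S
    intro t z hz
    have h1 : g z = x := hS z hz
    simp only [h1, ← hw₀, ContinuousMap.coe_mk]
    have : (1 - (t : ℝ)) • w₀ + (t : ℝ) • w₀ = w₀ := by
      rw [← add_smul]; simp
    rw [this]
    have h2 := stereo_left_inv hq (fun h => hxq (Subtype.ext h))
    rw [← hw₀] at h2
    rw [h2]


lemma exists_good_perturbation {k n : ℕ} (hkn : k < n)
    (x : sphere (0 : EuclideanSpace ℝ (Fin (n+1))) 1)
    (f : C((Fin k → I), sphere (0 : EuclideanSpace ℝ (Fin (n+1))) 1))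
    (hf : ∀ y ∈ Cube.boundary (Fin k), f y = x) :
    ∃ g : C((Fin k → I), sphere (0 : EuclideanSpace ℝ (Fin (n+1))) 1),
      f.HomotopicRel g (Cube.boundary (Fin k)) ∧
      (∃ q : sphere (0 : EuclideanSpace ℝ (Fin (n+1))) 1, q ≠ x ∧ ∀ t, g t ≠ q) ∧
      (∀ y ∈ Cube.boundary (Fin k), g y = x) := by
  classical
  set X := (Fin k → I)
  set E' := EuclideanSpace ℝ (Fin (n+1)) with hE'
  set fE : X → E' := fun t => (f t : E') with hfE
  have hfEc : Continuous fE := continuous_subtype_val.comp f.continuous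
  have hfE1 : ∀ t, ‖fE t‖ = 1 := fun t => mem_sphere_zero_iff_norm.1 (f t).2
  set x' : E' := (x : E') with hx'def
  have hx'1 : ‖x'‖ = 1 := mem_sphere_zero_iff_norm.1 x.2
  set p : E' := -x' with hpdef
  have hxp : dist x' p = 2 := by
    rw [hpdef, dist_eq_norm, sub_neg_eq_add, ← two_smul ℝ x', norm_smul]
    simp [hx'1]
  -- Lipschitz approximation
  obtain ⟨K, L, hL, hLf⟩ := lip_approx (m := n+1) hfEc (ε := 1/16) (by norm_num)
  -- Urysohn function
  obtain ⟨φ, hφ0, hφ1, hφ01⟩ := exists_continuous_zero_one_of_isClosed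
    (s := (fE ⁻¹' ball p 1)ᶜ) (t := fE ⁻¹' closedBall p (1/2))
    (isOpen_ball.preimage hfEc).isClosed_compl
    (isClosed_closedBall.preimage hfEc)
    (by
      rw [disjoint_compl_left_iff_subset]
      intro y hy
      have : dist (fE y) p ≤ 1/2 := hy
      exact mem_preimage.2 (mem_ball.2 (by linarith)))
  have hφmem : ∀ t, φ t ∈ Icc (0:ℝ) 1 := hφ01
  -- the perturbed map
  set c : X → E' := fun t => fE t + φ t • (L t - fE t) with hc
  have hc_dist : ∀ t, ‖c t - fE t‖ ≤ 1/16 := by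
    intro t
    have h1 : c t - fE t = φ t • (L t - fE t) := by rw [hc]; exact add_sub_cancel_left _ _
    rw [h1, norm_smul, Real.norm_eq_abs, abs_of_nonneg (hφmem t).1]
    have h2 : ‖L t - fE t‖ ≤ 1/16 := by rw [← dist_eq_norm]; exact hLf t
    nlinarith [(hφmem t).1, (hφmem t).2, norm_nonneg (L t - fE t)]
  have hc_norm : ∀ t, 15/16 ≤ ‖c t‖ := by
    intro t
    have h2 := abs_norm_sub_norm_le (c t) (fE t)
    have h1 := hc_dist t
    rw [hfE1 t] at h2
    have := abs_le.1 h2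
    linarith [this.1]
  have hc_cont : Continuous c :=
    hfEc.add ((φ.continuous).smul (hL.continuous.sub hfEc))
  have hLnorm : ∀ t, 15/16 ≤ ‖L t‖ := by
    intro t
    have h2 : ‖L t - fE t‖ ≤ 1/16 := by rw [← dist_eq_norm]; exact hLf t
    have h3 := abs_norm_sub_norm_le (L t) (fE t)
    rw [hfE1 t] at h3
    have := abs_le.1 h3
    linarith [this.1]
  -- normalized maps
  have hgmem : ∀ t, ‖c t‖⁻¹ • c t ∈ sphere (0:E') 1 := by
    intro t
    have h0 : ‖c t‖ ≠ 0 := by have := hc_norm t; positivity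
    rw [mem_sphere_zero_iff_norm, norm_smul, Real.norm_eq_abs, abs_inv, abs_norm]
    field_simp
  set g : C(X, sphere (0:E') 1) :=
    ⟨fun t => ⟨‖c t‖⁻¹ • c t, hgmem t⟩, by
      refine Continuous.subtype_mk ?_ _
      exact ((hc_cont.norm).inv₀ (fun t => by have := hc_norm t; positivity)).smul hc_cont⟩
    with hg
  -- boundary values
  have hφbdry : ∀ y ∈ Cube.boundary (Fin k), φ y = 0 := by
    intro y hy
    apply hφ0
    simp only [mem_compl_iff, mem_preimage, mem_ball]
    have hfEy : fE y = x' := by show (f y : E') = x'; rw [hf y hy]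
    show ¬ dist (fE y) p < 1
    rw [hfEy, hxp]
    norm_num
  have hgbdry : ∀ y ∈ Cube.boundary (Fin k), g y = x := by
    intro y hy
    have h1 : c y = x' := by
      rw [hc]; simp only [hφbdry y hy, zero_smul, add_zero]
      show (f y : E') = x'
      rw [hf y hy]
    apply Subtype.ext
    show ‖c y‖⁻¹ • c y = x'
    rw [h1, hx'1]
    simp
  -- homotopy f ≃ g rel boundary
  have hcs_norm : ∀ (s : I) (t : X), 15/16 ≤ ‖fE t + ((s:ℝ) * φ t) • (L t - fE t)‖ := by
    intro s t
    have h2 : ‖L t - fE t‖ ≤ 1/16 := by rw [← dist_eq_norm]; exact hLf t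
    have h3 : ‖((s:ℝ) * φ t) • (L t - fE t)‖ ≤ 1/16 := by
      rw [norm_smul, Real.norm_eq_abs, abs_of_nonneg (mul_nonneg s.2.1 (hφmem t).1)]
      have hsφ1 : (s:ℝ) * φ t ≤ 1 := mul_le_one₀ s.2.2 (hφmem t).1 (hφmem t).2
      calc (s:ℝ) * φ t * ‖L t - fE t‖ ≤ 1 * (1/16) :=
            mul_le_mul hsφ1 h2 (norm_nonneg _) zero_le_one
        _ = 1/16 := one_mul _
    have h4 := abs_norm_sub_norm_le (fE t + ((s:ℝ) * φ t) • (L t - fE t)) (fE t)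
    rw [hfE1 t] at h4
    simp only [add_sub_cancel_left] at h4
    have := abs_le.1 h4
    linarith [this.1]
  have hcs_mem : ∀ (s : I) (t : X),
      ‖fE t + ((s:ℝ) * φ t) • (L t - fE t)‖⁻¹ • (fE t + ((s:ℝ) * φ t) • (L t - fE t))
        ∈ sphere (0:E') 1 := by
    intro s t
    have h0 : ‖fE t + ((s:ℝ) * φ t) • (L t - fE t)‖ ≠ 0 := by
      have := hcs_norm s t; positivity
    rw [mem_sphere_zero_iff_norm, norm_smul, Real.norm_eq_abs, abs_inv, abs_norm]
    field_simp
  have hhom : f.HomotopicRel g (Cube.boundary (Fin k)) := by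
    refine ⟨⟨⟨⟨fun sp => ⟨_, hcs_mem sp.1 sp.2⟩, ?_⟩, ?_, ?_⟩, ?_⟩⟩
    · refine Continuous.subtype_mk ?_ _
      have hccont : Continuous fun sp : I × X =>
          fE sp.2 + ((sp.1:ℝ) * φ sp.2) • (L sp.2 - fE sp.2) := by
        refine (hfEc.comp continuous_snd).add ?_
        exact (((continuous_induced_dom.comp continuous_fst).mul
          (φ.continuous.comp continuous_snd)).smul
          ((hL.continuous.comp continuous_snd).sub (hfEc.comp continuous_snd)))
      have hcnorm : ∀ sp : I × X,
          ‖fE sp.2 + ((sp.1:ℝ) * φ sp.2) • (L sp.2 - fE sp.2)‖ ≠ 0 := by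
        intro sp; have := hcs_norm sp.1 sp.2; positivity
      exact ((hccont.norm).inv₀ hcnorm).smul hccont
    · intro t
      apply Subtype.ext
      show ‖fE t + ((0:ℝ) * φ t) • (L t - fE t)‖⁻¹ • _ = fE t
      simp only [Icc.coe_zero, zero_mul, zero_smul, add_zero, hfE1 t]
      simp
    · intro t
      apply Subtype.ext
      show ‖fE t + ((1:ℝ) * φ t) • (L t - fE t)‖⁻¹ • _ = (g t : E')
      simp only [Icc.coe_one, one_mul]
      rfl
    · intro s y hy
      apply Subtype.ext
      show ‖fE y + ((s:ℝ) * φ y) • (L y - fE y)‖⁻¹ • _ = (f y : E')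
      simp only [hφbdry y hy, mul_zero, zero_smul, add_zero, hfE1 y]
      simp [hfE]
  -- find the missed point
  set A : Set E' := range (fun t : X => ‖L t‖⁻¹ • L t) with hA
  have hdimA : dimH A ≤ (k : ENNReal) := by
    have hnL : LipschitzWith ((512/225 : NNReal) * K) (fun t : X => ‖L t‖⁻¹ • L t) := by
      refine LipschitzWith.of_dist_le_mul fun a b => ?_
      have h1 := dist_normalize_le (r := 15/16) (by norm_num) (hLnorm a) (hLnorm b)
      have h2 := hL.dist_le_mul a b
      have : ((512/225 : NNReal) * K : NNReal) = ((512/225 : ℝ) * K : ℝ) := by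
        push_cast; norm_num
      rw [NNReal.coe_mul]
      calc dist (‖L a‖⁻¹ • L a) (‖L b‖⁻¹ • L b) ≤ (2/(15/16)) * dist (L a) (L b) := h1
        _ ≤ (2/(15/16)) * (K * dist a b) := by
            have : (0:ℝ) < 2/(15/16) := by norm_num
            nlinarith
        _ ≤ ((512/225 : NNReal) : ℝ) * (K : ℝ) * dist a b := by
            have h515 : ((512/225 : NNReal) : ℝ) = 512/225 := by norm_num
            rw [h515]; nlinarith [K.coe_nonneg, dist_nonneg (x := a) (y := b),
              hL.dist_le_mul a b, dist_nonneg (x := L a) (y := L b)]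
    have h2 : dimH (univ : Set X) ≤ (k : ENNReal) := by
      set ι : X → (Fin k → ℝ) := fun t i => (t i : ℝ) with hι
      have hisom : Isometry ι := by
        intro a b
        rw [edist_pi_def, edist_pi_def]
        rfl
      calc dimH (univ : Set X) ≤ dimH (ι '' univ) := hisom.antilipschitz.le_dimH_image _
        _ ≤ dimH (univ : Set (Fin k → ℝ)) := dimH_mono (subset_univ _)
        _ = (k : ENNReal) := Real.dimH_univ_pi_fin k
    calc dimH A = dimH ((fun t : X => ‖L t‖⁻¹ • L t) '' univ) := by rw [image_univ]
      _ ≤ dimH (univ : Set X) := hnL.dimH_image_le _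
      _ ≤ (k : ENNReal) := h2
  have hdimB : (n : ENNReal) ≤ dimH (sphere (0:E') 1 ∩ ball p (1/4)) := by
    have := dimH_sphere_ball (n := n) x' hx'1 (r := 1/4) (by norm_num) (by norm_num)
    rwa [← hpdef] at this
  have hnotsub : ¬ (sphere (0:E') 1 ∩ ball p (1/4) ⊆ A) := by
    intro hsub
    have h1 : (n : ENNReal) ≤ (k : ENNReal) := hdimB.trans ((dimH_mono hsub).trans hdimA)
    have := Nat.cast_le (α := ENNReal) |>.1 h1
    omega
  obtain ⟨q', hq'B, hq'A⟩ := not_subset.1 hnotsub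
  have hq'sphere : q' ∈ sphere (0:E') 1 := hq'B.1
  have hq'p : dist q' p < 1/4 := mem_ball.1 hq'B.2
  set q : sphere (0:E') 1 := ⟨q', hq'sphere⟩ with hqdef
  have hqx : q ≠ x := by
    intro h
    have : q' = x' := congrArg Subtype.val h
    rw [this] at hq'p
    rw [hxp] at hq'p
    norm_num at hq'p
  have hgq : ∀ t, g t ≠ q := by
    intro t hgt
    have hgt' : ‖c t‖⁻¹ • c t = q' := congrArg Subtype.val hgt
    by_cases hφt : φ t = 1
    · apply hq'A
      have hct : c t = L t := by
        rw [hc]; simp only [hφt, one_smul]; rw [add_comm, sub_add_cancel]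
      refine ⟨t, ?_⟩
      simp only [← hct, hgt']
    · -- φ t ≠ 1, so f t is far from p
      have ht1 : t ∉ fE ⁻¹' closedBall p (1/2) := fun hmem => hφt (hφ1 hmem)
      have ht2 : 1/2 < dist (fE t) p := by
        by_contra h
        exact ht1 (mem_preimage.2 (mem_closedBall.2 (by linarith)))
      -- dist (g t) (fE t) ≤ 1/8
      have h1 : dist (‖c t‖⁻¹ • c t) (c t) ≤ 1/16 := by
        have h0 : (0:ℝ) < ‖c t‖ := lt_of_lt_of_le (by norm_num) (hc_norm t)
        rw [dist_eq_norm]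
        have heq : ‖c t‖⁻¹ • c t - c t = (‖c t‖⁻¹ - 1) • c t := by
          rw [sub_smul, one_smul]
        rw [heq, norm_smul, Real.norm_eq_abs]
        have hkey : (‖c t‖⁻¹ - 1) * ‖c t‖ = 1 - ‖c t‖ := by field_simp
        have h2 : |‖c t‖⁻¹ - 1| * ‖c t‖ = |1 - ‖c t‖| := by
          calc |‖c t‖⁻¹ - 1| * ‖c t‖ = |(‖c t‖⁻¹ - 1) * ‖c t‖| := by
                rw [abs_mul, abs_of_pos h0]
            _ = |1 - ‖c t‖| := by rw [hkey]
        rw [h2]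
        have h3 : |1 - ‖c t‖| = |‖fE t‖ - ‖c t‖| := by rw [hfE1 t]
        rw [h3]
        have h4 := abs_norm_sub_norm_le (fE t) (c t)
        have h5 : ‖fE t - c t‖ = ‖c t - fE t‖ := norm_sub_rev (E := EuclideanSpace ℝ (Fin (n+1))) _ _
        have h6 := hc_dist t
        linarith
      have h7 : dist (fE t) (‖c t‖⁻¹ • c t) ≤ 1/8 := by
        have := dist_triangle (fE t) (c t) (‖c t‖⁻¹ • c t)
        have h8 : dist (fE t) (c t) ≤ 1/16 := by
          rw [dist_comm, dist_eq_norm]; exact hc_dist t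
        rw [dist_comm (c t) _] at this
        linarith
      rw [hgt'] at h7
      have h9 : dist (fE t) p ≤ dist (fE t) q' + dist q' p := dist_triangle _ _ _
      linarith
  exact ⟨g, hhom, ⟨q, hqx, hgq⟩, hgbdry⟩


theorem pi_k_sphere_subsingleton (k n : ℕ) (hk : 1 ≤ k) (hkn : k < n)
    (x : Metric.sphere (0 : EuclideanSpace ℝ (Fin (n + 1))) 1) :
    Nonempty (π_ k (Metric.sphere (0 : EuclideanSpace ℝ (Fin (n + 1))) 1) x) ∧
    Subsingleton (π_ k (Metric.sphere (0 : EuclideanSpace ℝ (Fin (n + 1))) 1) x) := by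
  have key : ∀ F : GenLoop (Fin k) (Metric.sphere (0 : EuclideanSpace ℝ (Fin (n + 1))) 1) x,
      GenLoop.Homotopic F GenLoop.const := by
    intro F
    obtain ⟨g, hfg, ⟨q, hqx, hgq⟩, hgb⟩ := exists_good_perturbation hkn x F.1 F.2
    have h2 := nullhomotopic_rel_of_missed q x hqx.symm g hgq (Cube.boundary (Fin k)) hgb
    exact hfg.trans h2
  refine ⟨⟨Quotient.mk _ GenLoop.const⟩, ?_⟩
  constructor
  intro a b
  refine Quotient.inductionOn₂ a b fun F G => ?_
  exact Quotient.sound ((key F).trans (key G).symm)
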